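/- For every natural number n ≥ 3, the root s 0 does not lie in Rad F: no root of the general monic polynomial of degree n ≥ 3 can be written as a rational expression in the coefficients together with single (un-nested) radicals of such rational expressions (the paper's second impossibility result). -/

import Mathlib

open MvPolynomial

/-- `E n` is the field of rational functions in `n` variables over `ℚ`. -/
noncomputable abbrev E (n : ℕ) : Type :=
  FractionRing (MvPolynomial (Fin n) ℚ)

/-- `s n i` is the image in `E n` of the variable `X i`; these are the roots of the
general monic polynomial of degree `n`. -/
noncomputable def s (n : ℕ) (i : Fin n) : E n :=
  algebraMap (MvPolynomial (Fin n) ℚ) (E n) (X i)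

/-- `F n` is the subfield of `E n` generated by the images of the elementary symmetric
polynomials `e₁, …, eₙ`, i.e. by the coefficients of the general monic polynomial
`∏ i, (Y - s i)` of degree `n`. -/
noncomputable def F (n : ℕ) : Subfield (E n) :=
  Subfield.closure
    (Set.range fun k : Fin n =>
      algebraMap (MvPolynomial (Fin n) ℚ) (E n) (esymm (Fin n) ℚ ((k : ℕ) + 1)))


/-- For a subfield `K` of a field `L`, `Rad K` is the subfield of `L` generated by `K`
together with all elements `y` such that `y ^ m ∈ K` for some integer `m ≥ 1`. -/
def Rad {L : Type*} [Field L] (K : Subfield L) : Subfield L :=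
  Subfield.closure ((K : Set L) ∪ {y : L | ∃ m : ℕ, 1 ≤ m ∧ y ^ m ∈ K})

/-- **Second impossibility result**: for `n ≥ 3`, no root of the general monic polynomial of
degree `n` can be written as a rational expression in the coefficients together with single
(un-nested) radicals of such rational expressions: `s 0 ∉ Rad F`. -/
lemma rat_sq_eq_one {q : ℚ} {m : ℕ} (hm : 1 ≤ m) (h : q ^ m = 1) : q ^ 2 = 1 := by
  have habs : |q| ^ m = 1 := by rw [← abs_pow, h, abs_one]
  have h1 : |q| = 1 := by
    rcases lt_trichotomy |q| 1 with hlt | heq | hgt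
    · exact absurd habs
        (by have := pow_lt_one₀ (abs_nonneg q) hlt (by omega : m ≠ 0); linarith)
    · exact heq
    · exact absurd habs (by have := one_lt_pow₀ hgt (by omega : m ≠ 0); linarith)
  rw [← sq_abs, h1, one_pow]

lemma E_sq_eq_one (n : ℕ) {ζ : E n} {m : ℕ} (hm : 1 ≤ m) (h : ζ ^ m = 1) : ζ ^ 2 = 1 := by
  have hint : IsIntegral (MvPolynomial (Fin n) ℚ) ζ := by
    refine ⟨Polynomial.X ^ m - 1, ?_, ?_⟩
    · have := Polynomial.monic_X_pow_sub_C (1 : MvPolynomial (Fin n) ℚ) (by omega : m ≠ 0)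
      simpa using this
    · simp [Polynomial.eval₂, h]
  obtain ⟨p, hp⟩ := IsIntegrallyClosed.isIntegral_iff.mp hint
  have hinj := IsFractionRing.injective (MvPolynomial (Fin n) ℚ) (E n)
  have hpm : p ^ m = 1 := by
    apply hinj
    rw [map_pow, hp, map_one, h]
  have hp2 : p ^ 2 = 1 := by
    apply MvPolynomial.funext
    intro x
    have hx : (eval x p) ^ m = 1 := by rw [← map_pow, hpm, map_one]
    have := rat_sq_eq_one hm hx
    rw [map_pow, map_one, this]
  rw [← hp, ← map_pow, hp2, map_one]

theorem second_impossibility (n : ℕ) (hn : 3 ≤ n) :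
    s n ⟨0, by omega⟩ ∉ Rad (F n) := by
  intro hmem
  set A := MvPolynomial (Fin n) ℚ with hA
  set i0 : Fin n := ⟨0, by omega⟩ with hi0
  set i1 : Fin n := ⟨1, by omega⟩ with hi1
  set i2 : Fin n := ⟨2, by omega⟩ with hi2
  have h01 : i0 ≠ i1 := Fin.ne_of_val_ne (by norm_num)
  have h02 : i0 ≠ i2 := Fin.ne_of_val_ne (by norm_num)
  have h12 : i1 ≠ i2 := Fin.ne_of_val_ne (by norm_num)
  set c : Equiv.Perm (Fin n) := (Equiv.swap i0 i1).trans (Equiv.swap i1 i2) with hc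
  set σ : E n ≃+* E n :=
    IsFractionRing.ringEquivOfRingEquiv (renameEquiv ℚ c).toRingEquiv with hσ
  have hσa : ∀ p : A, σ (algebraMap A (E n) p) = algebraMap A (E n) (rename c p) := by
    intro p
    rw [hσ, IsFractionRing.ringEquivOfRingEquiv_algebraMap]
    simp
    rfl
  have hF : ∀ x ∈ F n, σ x = x := by
    have hle : F n ≤ RingHom.eqLocusField σ.toRingHom (RingHom.id (E n)) := by
      rw [F, Subfield.closure_le]
      rintro _ ⟨k, rfl⟩
      show σ _ = _
      rw [hσa, rename_esymm]
      rfl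
    exact fun x hx => hle hx
  have hRad : ∀ x ∈ Rad (F n), σ (σ x) = x := by
    have hle : Rad (F n) ≤
        RingHom.eqLocusField (σ.toRingHom.comp σ.toRingHom) (RingHom.id (E n)) := by
      rw [Rad, Subfield.closure_le]
      rintro y (hy | ⟨m, hm, hym⟩)
      · show σ (σ y) = y
        rw [hF y hy, hF y hy]
      · show σ (σ y) = y
        by_cases hy0 : y = 0
        · simp [hy0]
        · set ζ := σ y / y with hζ
          have hζm : ζ ^ m = 1 := by
            rw [hζ, div_pow, ← map_pow, hF _ hym, div_self (pow_ne_zero _ hy0)]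
          have hζ2 := E_sq_eq_one n hm hζm
          have hζval : ζ = 1 ∨ ζ = -1 := by
            have hfac : (ζ - 1) * (ζ + 1) = 0 := by
              have : ζ ^ 2 - 1 = 0 := by rw [hζ2]; ring
              calc (ζ - 1) * (ζ + 1) = ζ ^ 2 - 1 := by ring
              _ = 0 := this
            rcases mul_eq_zero.mp hfac with h | h
            · left; linear_combination h
            · right; linear_combination h
          have hσζ : σ ζ = ζ := by rcases hζval with h | h <;> simp [h]
          have hσy : σ y = ζ * y := by
            rw [hζ, div_mul_cancel₀ _ hy0]
          calc σ (σ y) = σ (ζ * y) := by rw [← hσy]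
          _ = σ ζ * σ y := map_mul σ ζ y
          _ = ζ * (ζ * y) := by rw [hσζ, hσy]
          _ = ζ ^ 2 * y := by ring
          _ = y := by rw [hζ2, one_mul]
    exact fun x hx => hle hx
  have hs : ∀ i : Fin n, σ (s n i) = s n (c i) := by
    intro i
    rw [s, hσa, rename_X, s]
  have h0 := hRad _ hmem
  rw [hs, hs] at h0
  have hcc : c (c i0) = i1 := by
    have h1 : c i0 = i2 := by
      rw [hc]
      simp only [Equiv.trans_apply]
      rw [Equiv.swap_apply_left, Equiv.swap_apply_left]
    have h2 : c i2 = i1 := by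
      rw [hc]
      simp only [Equiv.trans_apply]
      rw [Equiv.swap_apply_of_ne_of_ne (Ne.symm h02) (Ne.symm h12),
        Equiv.swap_apply_right]
    rw [h1, h2]
  rw [hcc] at h0
  have hXeq : (X i1 : A) = X i0 :=
    IsFractionRing.injective A (E n) h0
  exact h01 (X_injective hXeq).symm
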